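/- Let N be an even positive integer and p an integer with 2 ≤ p ≤ N/2; assume u^p[2n]² + v^p[2n]² > 0 for every n. Define the quasi-analytic wavelet packets Ψ_{±,λ} = ψ_{[1],λ}^p ± i·C(ψ_{[1],λ}^p), λ = 0,1. Then for every x ∈ Π[N] and every k: Σ_{λ=0}^{1} Σ_{l=0}^{N/2−1} ⟨x, Ψ_{+,λ}[·−2l]⟩·Ψ_{+,λ}[k−2l] = 2·(x[k] + i·H(x)[k]) and Σ_{λ=0}^{1} Σ_{l=0}^{N/2−1} ⟨x, Ψ_{−,λ}[·−2l]⟩·Ψ_{−,λ}[k−2l] = 2·(x[k] − i·H(x)[k]). In particular, for real-valued x, x equals the real part of (1/2)·Σ_{λ,l} ⟨x, Ψ_{±,λ}[·−2l]⟩·Ψ_{±,λ}[·−2l]. -/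

import Mathlib

open MeasureTheory

namespace WP

/-- The root of unity ω = e^{2πi/N}. -/
noncomputable def ww (N : ℕ) : ℂ := Complex.exp (2 * Real.pi * Complex.I / N)

/-- DFT of a signal `x ∈ Π[N]`: x̂[n] = Σ_{k=0}^{N−1} ω^{−kn} x[k]. -/
noncomputable def dft (N : ℕ) (x : ℤ → ℂ) (n : ℤ) : ℂ :=
  ∑ k ∈ Finset.range N, ww N ^ (-((k : ℤ) * n)) * x k

/-- Inner product on `Π[N]`. -/
noncomputable def inner1 (N : ℕ) (x y : ℤ → ℂ) : ℂ :=
  ∑ k ∈ Finset.range N, x k * (starRingEnd ℂ) (y k)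

/-- The discrete periodic Hilbert transform, defined via the DFT:
    Ĥ(x)[n] = −i·x̂[n] for 0<n<N/2, i·x̂[n] for N/2<n<N, 0 at n=0 and n=N/2. -/
noncomputable def hilbertT (N : ℕ) (x : ℤ → ℂ) (k : ℤ) : ℂ :=
  (N : ℂ)⁻¹ * ∑ n ∈ Finset.range N,
    (if 0 < n ∧ n < N / 2 then -Complex.I else if N / 2 < n ∧ n < N then Complex.I else 0) *
      dft N x n * ww N ^ ((k * (n : ℤ)))

/-- The complementary-WP operator `C`, defined via the DFT:
    Ĉ(x)[n] = −i·x̂[n] for 0<n<N/2, i·x̂[n] for N/2<n<N, x̂[0] at 0, x̂[N/2] at N/2. -/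
noncomputable def cwpT (N : ℕ) (x : ℤ → ℂ) (k : ℤ) : ℂ :=
  (N : ℂ)⁻¹ * ∑ n ∈ Finset.range N,
    (if n = 0 ∨ n = N / 2 then 1 else if n < N / 2 then -Complex.I else Complex.I) *
      dft N x n * ww N ^ ((k * (n : ℤ)))

/-- The order-p B-spline b^p(t). -/
noncomputable def bspline (p : ℕ) (t : ℝ) : ℝ :=
  (1 / (Nat.factorial (p - 1) : ℝ)) *
    ∑ k ∈ Finset.range (p + 1),
      (-1 : ℝ) ^ k * (p.choose k : ℝ) * max (t + (p : ℝ) / 2 - (k : ℝ)) 0 ^ (p - 1)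

/-- u^p[n] = Σ_{k=−N/2}^{N/2−1} ω^{−kn} b^p(k). -/
noncomputable def uSeq (N p : ℕ) (n : ℤ) : ℂ :=
  ∑ k ∈ Finset.range N,
    ww N ^ (-(((k : ℤ) - (N : ℤ) / 2) * n)) * (bspline p ((k : ℝ) - (N : ℝ) / 2) : ℂ)

/-- v^p[n] = e^{−πin/N} Σ_{k=−N/2}^{N/2−1} ω^{−kn} b^p(k+1/2). -/
noncomputable def vSeq (N p : ℕ) (n : ℤ) : ℂ :=
  Complex.exp (-Real.pi * Complex.I * n / N) *
    ∑ k ∈ Finset.range N,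
      ww N ^ (-(((k : ℤ) - (N : ℤ) / 2) * n)) *
        (bspline p ((k : ℝ) - (N : ℝ) / 2 + 1 / 2) : ℂ)

/-- The span-two discrete-time B-spline b_{[1]}^p ∈ Π[N]:
    the N-periodic signal with b_{[1]}^p[k] = b^p(k/2)/2 for −N/2 ≤ k ≤ N/2−1. -/
noncomputable def bs1 (N p : ℕ) (k : ℤ) : ℂ :=
  ((bspline p ((((k + (N : ℤ) / 2) % (N : ℤ) - (N : ℤ) / 2 : ℤ) : ℝ) / 2) : ℝ) : ℂ) / 2

/-- Its DFT b̂_{[1]}^p[n] = Σ_{k=−N/2}^{N/2−1} ω^{−kn} b_{[1]}^p[k]. -/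
noncomputable def bhat1 (N p : ℕ) (n : ℤ) : ℂ :=
  ∑ k ∈ Finset.range N,
    ww N ^ (-(((k : ℤ) - (N : ℤ) / 2) * n)) * bs1 N p ((k : ℤ) - (N : ℤ) / 2)

/-- Υ^p[n] = (u^p[2n]² + v^p[2n]²)/4. -/
noncomputable def upsilon (N p : ℕ) (n : ℤ) : ℂ :=
  (uSeq N p (2 * n) ^ 2 + vSeq N p (2 * n) ^ 2) / 4

/-- β[n] = b̂_{[1]}^p[n] / √(Υ^p[n]). -/
noncomputable def betaS (N p : ℕ) (n : ℤ) : ℂ := bhat1 N p n / upsilon N p n ^ ((1 : ℂ) / 2)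

/-- α[n] = ω^n · β[n+N/2]. -/
noncomputable def alphaS (N p : ℕ) (n : ℤ) : ℂ := ww N ^ n * betaS N p (n + (N : ℤ) / 2)

/-- The first-level wavelet packets ψ_{[1],λ}^p, λ = 0,1, defined via their DFTs
    ψ̂_{[1],0}^p[n] = β[n] and ψ̂_{[1],1}^p[n] = α[n]. -/
noncomputable def psi1 (N p lam : ℕ) (k : ℤ) : ℂ :=
  (N : ℂ)⁻¹ * ∑ n ∈ Finset.range N,
    (if lam = 0 then betaS N p n else alphaS N p n) * ww N ^ ((k * (n : ℤ)))


open scoped ComplexOrder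

/-- The first-level quasi-analytic wavelet packets Ψ_{±,λ} = ψ_{[1],λ}^p ± i·C(ψ_{[1],λ}^p). -/
noncomputable def qwpP (N p lam : ℕ) (k : ℤ) : ℂ :=
  psi1 N p lam k + Complex.I * cwpT N (psi1 N p lam) k

noncomputable def qwpM (N p lam : ℕ) (k : ℤ) : ℂ :=
  psi1 N p lam k - Complex.I * cwpT N (psi1 N p lam) k


set_option linter.unusedSectionVars false

lemma ww_ne_zero (N : ℕ) : ww N ≠ 0 := Complex.exp_ne_zero _

lemma ww_prim (N : ℕ) (hN : 0 < N) : IsPrimitiveRoot (ww N) N := by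
  have := Complex.isPrimitiveRoot_exp N hN.ne'
  exact this

lemma ww_zpow_one_iff (N : ℕ) (hN : 0 < N) (d : ℤ) : ww N ^ d = 1 ↔ (N:ℤ) ∣ d :=
  (ww_prim N hN).zpow_eq_one_iff_dvd d

lemma ww_pow_N (N : ℕ) (hN : 0 < N) : ww N ^ (N:ℤ) = 1 := by
  rw [ww_zpow_one_iff N hN]

lemma geo_sum (m : ℕ) (z : ℂ) (hz : z ^ m = 1) (h1 : z ≠ 1) :
    ∑ k ∈ Finset.range m, z ^ k = 0 := by
  rw [geom_sum_eq h1, hz, sub_self, zero_div]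

lemma sum_ww (N : ℕ) (hN : 0 < N) (d : ℤ) :
    ∑ k ∈ Finset.range N, ww N ^ ((k:ℤ) * d) = if (N:ℤ) ∣ d then (N:ℂ) else 0 := by
  have hterm : ∀ k : ℕ, ww N ^ ((k:ℤ) * d) = (ww N ^ d) ^ k := by
    intro k
    rw [mul_comm, zpow_mul, zpow_natCast]
  rw [Finset.sum_congr rfl (fun k _ => hterm k)]
  by_cases h : (N:ℤ) ∣ d
  · rw [if_pos h]
    have : ww N ^ d = 1 := (ww_zpow_one_iff N hN d).2 h
    simp [this]
  · rw [if_neg h]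
    apply geo_sum
    · rw [← zpow_natCast, ← zpow_mul, mul_comm, zpow_mul, ww_pow_N N hN, one_zpow]
    · intro hc
      exact h ((ww_zpow_one_iff N hN d).1 hc)

lemma sum_ww_half (N M : ℕ) (hNM : N = 2 * M) (hM : 0 < M) (d : ℤ) :
    ∑ l ∈ Finset.range M, ww N ^ (2 * (l:ℤ) * d) = if (M:ℤ) ∣ d then (M:ℂ) else 0 := by
  have hN : 0 < N := by omega
  have hterm : ∀ l : ℕ, ww N ^ (2 * (l:ℤ) * d) = (ww N ^ (2*d)) ^ l := by
    intro l
    rw [show 2 * (l:ℤ) * d = (2*d) * l by ring, zpow_mul, zpow_natCast]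
  rw [Finset.sum_congr rfl (fun l _ => hterm l)]
  have hiff : ww N ^ (2*d) = 1 ↔ (M:ℤ) ∣ d := by
    rw [ww_zpow_one_iff N hN, hNM]
    push_cast
    constructor
    · rintro ⟨c, hc⟩; exact ⟨c, by linarith⟩
    · rintro ⟨c, hc⟩; exact ⟨c, by rw [hc]; ring⟩
  by_cases h : (M:ℤ) ∣ d
  · rw [if_pos h]
    simp [hiff.2 h]
  · rw [if_neg h]
    apply geo_sum
    · rw [← zpow_natCast, ← zpow_mul, show (2*d) * (M:ℤ) = (N:ℤ) * d by rw [hNM]; push_cast; ring,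
        zpow_mul, ww_pow_N N hN, one_zpow]
    · intro hc
      exact h (hiff.1 hc)

lemma conj_ww_zpow (N : ℕ) (m : ℤ) :
    (starRingEnd ℂ) (ww N ^ m) = ww N ^ (-m) := by
  have h : (starRingEnd ℂ) (ww N) = (ww N)⁻¹ := by
    rw [ww, ← Complex.exp_conj, ← Complex.exp_neg]
    congr 1
    simp only [map_div₀, map_mul, Complex.conj_I, map_natCast, map_ofNat, Complex.conj_ofReal]
    ring
  rw [map_zpow₀, h, inv_zpow, zpow_neg]

lemma ww_pow_half (N M : ℕ) (hNM : N = 2 * M) (hM : 0 < M) : ww N ^ (M:ℤ) = -1 := by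
  have : ww N ^ (M:ℤ) = Complex.exp (Real.pi * Complex.I) := by
    rw [ww, ← Complex.exp_int_mul]
    congr 1
    have hNC : (N:ℂ) ≠ 0 := Nat.cast_ne_zero.mpr (by omega)
    field_simp
    rw [hNM]
    push_cast
    ring
  rw [this, Complex.exp_pi_mul_I]

lemma split_binom (p : ℕ) (f : ℕ → ℝ) :
    ∑ k ∈ Finset.range (p + 2), (-1 : ℝ) ^ k * ((p+1).choose k : ℝ) * f k
      = ∑ k ∈ Finset.range (p + 1), (-1 : ℝ) ^ k * (p.choose k : ℝ) * (f k - f (k+1)) := by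
  rw [Finset.sum_range_succ' (fun k => (-1 : ℝ) ^ k * ((p+1).choose k : ℝ) * f k)]
  have h2 : ∀ k, ((p+1).choose (k+1) : ℝ) = (p.choose k : ℝ) + (p.choose (k+1) : ℝ) := by
    intro k; rw [Nat.choose_succ_succ]; push_cast; ring
  have e1 : ∑ k ∈ Finset.range (p + 1), (-1 : ℝ) ^ (k+1) * ((p+1).choose (k+1) : ℝ) * f (k+1)
      = (∑ k ∈ Finset.range (p + 1), -((-1 : ℝ) ^ k * (p.choose k : ℝ) * f (k+1)))
        + ∑ k ∈ Finset.range (p + 1), (-1 : ℝ) ^ (k+1) * (p.choose (k+1) : ℝ) * f (k+1) := by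
    rw [← Finset.sum_add_distrib]
    exact Finset.sum_congr rfl (fun k _ => by rw [h2]; ring)
  have e2 : ∑ k ∈ Finset.range (p + 1), (-1 : ℝ) ^ (k+1) * (p.choose (k+1) : ℝ) * f (k+1)
      = ∑ k ∈ Finset.range (p + 1), (-1 : ℝ) ^ k * (p.choose k : ℝ) * f k
        - (-1 : ℝ) ^ 0 * (p.choose 0 : ℝ) * f 0 := by
    have := Finset.sum_range_succ' (fun k => (-1 : ℝ) ^ k * (p.choose k : ℝ) * f k) (p + 1)
    rw [Finset.sum_range_succ (fun k => (-1 : ℝ) ^ k * (p.choose k : ℝ) * f k) (p+1)] at this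
    have hz : (-1 : ℝ) ^ (p+1) * (p.choose (p+1) : ℝ) * f (p+1) = 0 := by
      simp [Nat.choose_succ_self]
    linarith [this]
  rw [e1, e2]
  have hAB : (∑ k ∈ Finset.range (p + 1), -((-1 : ℝ) ^ k * (p.choose k : ℝ) * f (k+1)))
      + ∑ k ∈ Finset.range (p + 1), (-1 : ℝ) ^ k * (p.choose k : ℝ) * f k
      = ∑ k ∈ Finset.range (p + 1), (-1 : ℝ) ^ k * (p.choose k : ℝ) * (f k - f (k+1)) := by
    rw [← Finset.sum_add_distrib]
    exact Finset.sum_congr rfl (fun k _ => by ring)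
  simp only [pow_zero, Nat.choose_zero_right, Nat.cast_one, one_mul] at *
  linarith [hAB]

lemma alt_sum : ∀ (p m : ℕ) (c : ℝ), m < p →
    ∑ k ∈ Finset.range (p + 1), (-1 : ℝ) ^ k * (p.choose k : ℝ) * (c - k) ^ m = 0 := by
  intro p
  induction p with
  | zero => intro m c hm; omega
  | succ p ih =>
    intro m c hm
    have : p + 1 + 1 = p + 2 := rfl
    rw [this, split_binom p (fun k => (c - k) ^ m)]
    have key : ∀ k ∈ Finset.range (p+1),
        (-1:ℝ)^k * (p.choose k : ℝ) * ((c - k)^m - (c - (k+1:ℕ))^m)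
        = ∑ j ∈ Finset.range m, (m.choose j : ℝ) *
            ((-1:ℝ)^k * (p.choose k : ℝ) * ((c-1) - k)^j) := by
      intro k _
      have e : (c - (k:ℝ)) ^ m - (c - ((k+1:ℕ):ℝ)) ^ m
          = ∑ j ∈ Finset.range m, (c-1-(k:ℝ))^j * (m.choose j : ℝ) := by
        rw [show c - (k:ℝ) = (c-1-(k:ℝ)) + 1 by ring, add_pow, Finset.sum_range_succ]
        have hc : (c - ((k+1:ℕ):ℝ)) ^ m = (c-1-(k:ℝ))^m := by push_cast; ring_nf
        simp only [one_pow, mul_one, Nat.choose_self, Nat.cast_one, hc]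
        rw [add_sub_cancel_right]
      rw [e, Finset.mul_sum]
      exact Finset.sum_congr rfl (fun j _ => by ring)
    rw [Finset.sum_congr rfl key, Finset.sum_comm]
    apply Finset.sum_eq_zero
    intro j hj
    rw [← Finset.mul_sum, ih j (c-1) (by simp at hj; omega), mul_zero]


lemma negpart (m : ℕ) (hm : 1 ≤ m) (x : ℝ) :
    max (-x) 0 ^ m = (-1:ℝ)^m * (x^m - max x 0 ^ m) := by
  rcases le_or_gt x 0 with h | h
  · rw [max_eq_left (by linarith), max_eq_right h, zero_pow (by omega), sub_zero, neg_pow]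
  · rw [max_eq_right (by linarith), max_eq_left h.le, sub_self, mul_zero,
      zero_pow (by omega)]

lemma bspline_zero_le (p : ℕ) (hp : 2 ≤ p) {t : ℝ} (ht : t ≤ -(p:ℝ)/2) : bspline p t = 0 := by
  unfold bspline
  rw [Finset.sum_eq_zero, mul_zero]
  intro k hk
  have h0 : (0:ℝ) ≤ k := Nat.cast_nonneg k
  have h1 : t + (p:ℝ)/2 - k ≤ 0 := by linarith
  rw [max_eq_right h1, zero_pow (by omega), mul_zero]

lemma bspline_neg (p : ℕ) (hp : 2 ≤ p) (t : ℝ) : bspline p (-t) = bspline p t := by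
  unfold bspline
  congr 1
  have hrefl := Finset.sum_range_reflect
    (fun k => (-1 : ℝ) ^ k * (p.choose k : ℝ) * max (-t + (p : ℝ) / 2 - (k : ℝ)) 0 ^ (p - 1)) (p+1)
  rw [← hrefl]
  have key : ∀ k ∈ Finset.range (p+1),
      (-1 : ℝ) ^ (p + 1 - 1 - k) * (p.choose (p + 1 - 1 - k) : ℝ) *
          max (-t + (p : ℝ) / 2 - ((p + 1 - 1 - k : ℕ) : ℝ)) 0 ^ (p - 1)
      = -((-1:ℝ)^k * (p.choose k : ℝ) *
          (((t + (p:ℝ)/2 - k))^(p-1) - max (t + (p:ℝ)/2 - k) 0 ^ (p-1))) := by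
    intro k hk
    have hkp : k ≤ p := by simp at hk; omega
    have h1 : p + 1 - 1 - k = p - k := by omega
    have h2 : ((p - k : ℕ) : ℝ) = (p:ℝ) - k := by
      push_cast [Nat.cast_sub hkp]; ring
    have hch : p.choose (p - k) = p.choose k := Nat.choose_symm hkp
    have hsq : (-1:ℝ)^k * (-1:ℝ)^k = 1 := by
      rw [← pow_add, ← two_mul, pow_mul]; norm_num
    have h3 : (-1:ℝ)^(p-k) * (-1:ℝ)^k = (-1:ℝ)^p := by
      rw [← pow_add]; congr 1; omega
    have h3' : (-1:ℝ)^(p-k) = (-1:ℝ)^p * (-1:ℝ)^k := by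
      calc (-1:ℝ)^(p-k) = (-1:ℝ)^(p-k) * ((-1:ℝ)^k * (-1:ℝ)^k) := by rw [hsq, mul_one]
        _ = ((-1:ℝ)^(p-k) * (-1:ℝ)^k) * (-1:ℝ)^k := by ring
        _ = (-1:ℝ)^p * (-1:ℝ)^k := by rw [h3]
    have h4 : (-1:ℝ)^p * (-1:ℝ)^(p-1) = -1 := by
      rw [← pow_add, show p + (p-1) = 2*(p-1)+1 from by omega, pow_succ, pow_mul]
      norm_num
    have harg : -t + (p : ℝ) / 2 - ((p - k : ℕ) : ℝ) = -(t + (p:ℝ)/2 - k) := by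
      rw [h2]; ring
    rw [h1, harg, hch, negpart (p-1) (by omega), h3']
    linear_combination ((-1:ℝ)^k * (p.choose k : ℝ) *
      ((t + (p:ℝ)/2 - k)^(p-1) - max (t + (p:ℝ)/2 - k) 0 ^ (p-1))) * h4
  rw [Finset.sum_congr rfl key]
  have := alt_sum p (p-1) (t + (p:ℝ)/2) (by omega)
  rw [Finset.sum_congr rfl (fun k (_ : k ∈ Finset.range (p+1)) => by
    show -((-1:ℝ)^k * (p.choose k : ℝ) * ((t + (p:ℝ)/2 - k)^(p-1) - max (t + (p:ℝ)/2 - k) 0 ^ (p-1)))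
      = -((-1:ℝ)^k * (p.choose k : ℝ) * ((t + (p:ℝ)/2 - k)^(p-1)))
        + (-1:ℝ)^k * (p.choose k : ℝ) * max (t + (p:ℝ)/2 - k) 0 ^ (p-1)
    ring), Finset.sum_add_distrib, Finset.sum_neg_distrib, this, neg_zero, zero_add]

lemma bspline_zero_ge (p : ℕ) (hp : 2 ≤ p) {t : ℝ} (ht : (p:ℝ)/2 ≤ t) : bspline p t = 0 := by
  rw [← bspline_neg p hp t, bspline_zero_le p hp (by linarith)]

section C
variable {N p M : ℕ} (hNM : N = 2*M) (hp : 2 ≤ p) (hpM : p ≤ M)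

lemma half_int (hNM : N = 2*M) : (N:ℤ)/2 = (M:ℤ) := by omega

lemma shift_to_Ico (hNM : N = 2*M) (f : ℤ → ℂ) :
    ∑ k ∈ Finset.range N, f ((k:ℤ) - (N:ℤ)/2)
      = ∑ j ∈ Finset.Ico (-(M:ℤ)) (M:ℤ), f j := by
  rw [half_int hNM]
  apply Finset.sum_nbij' (i := fun (k:ℕ) => (k:ℤ) - (M:ℤ)) (j := fun (z:ℤ) => (z + (M:ℤ)).toNat)
  · intro a ha
    simp only [Finset.mem_range] at ha
    simp only [Finset.mem_Ico]
    omega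
  · intro a ha
    simp only [Finset.mem_Ico] at ha
    simp only [Finset.mem_range]
    omega
  · intro a _; omega
  · intro a ha
    simp only [Finset.mem_Ico] at ha
    omega
  · intro a _; rfl

lemma sum_Ico_top (a b : ℤ) (hab : a ≤ b) (f : ℤ → ℂ) :
    ∑ j ∈ Finset.Ico a (b+1), f j = (∑ j ∈ Finset.Ico a b, f j) + f b := by
  have : Finset.Ico a (b+1) = insert b (Finset.Ico a b) := by
    ext x
    simp only [Finset.mem_Ico, Finset.mem_insert]
    omega
  rw [this, Finset.sum_insert (by simp [Finset.mem_Ico])]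
  ring

lemma sum_Ico_bot (a b : ℤ) (hab : a < b) (f : ℤ → ℂ) :
    ∑ j ∈ Finset.Ico a b, f j = f a + ∑ j ∈ Finset.Ico (a+1) b, f j := by
  have : Finset.Ico a b = insert a (Finset.Ico (a+1) b) := by
    ext x
    simp only [Finset.mem_Ico, Finset.mem_insert]
    omega
  rw [this, Finset.sum_insert (by simp [Finset.mem_Ico])]

lemma pair_aux (f : ℤ → ℂ) (a : ℤ) (m : ℕ) :
    ∑ j ∈ Finset.Ico (2*a) (2*(a+m)), f j
      = ∑ i ∈ Finset.Ico a (a+(m:ℤ)), (f (2*i) + f (2*i+1)) := by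
  induction m with
  | zero => simp
  | succ m ih =>
    have e1 : 2*(a+((m:ℤ)+1)) = (2*(a+(m:ℤ))+1)+1 := by ring
    have e2 : a + ((m:ℤ)+1) = (a+(m:ℤ))+1 := by ring
    push_cast
    rw [e1, e2, sum_Ico_top _ _ (by omega), sum_Ico_top _ _ (by omega),
      sum_Ico_top _ _ (by omega), ih]
    ring

lemma pair_Ico (a b : ℤ) (f : ℤ → ℂ) :
    ∑ j ∈ Finset.Ico (2*a) (2*b), f j
      = ∑ i ∈ Finset.Ico a b, (f (2*i) + f (2*i+1)) := by
  rcases le_or_gt a b with hab | hab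
  · have hb : b = a + ((b-a).toNat : ℤ) := by omega
    rw [hb, pair_aux]
  · rw [Finset.Ico_eq_empty (by omega), Finset.Ico_eq_empty (by omega)]
    simp


lemma ww_ne_zero' : ww N ≠ 0 := Complex.exp_ne_zero _

lemma bs1_eval (hNM : N = 2*M) (j : ℤ) (hj1 : -(M:ℤ) ≤ j) (hj2 : j < (M:ℤ)) :
    bs1 N p j = ((bspline p ((j:ℝ)/2) : ℝ) : ℂ)/2 := by
  unfold bs1
  rw [half_int hNM]
  have hmod : (j + (M:ℤ)) % (N:ℤ) = j + M := Int.emod_eq_of_lt (by omega) (by omega)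
  rw [hmod]
  norm_num

lemma uSeq_Ico (hNM : N = 2*M) (n : ℤ) :
    uSeq N p n = ∑ j ∈ Finset.Ico (-(M:ℤ)) (M:ℤ), ww N ^ (-(j*n)) * ((bspline p (j:ℝ) : ℝ) : ℂ) := by
  rw [uSeq, ← shift_to_Ico hNM (fun j => ww N ^ (-(j*n)) * ((bspline p (j:ℝ) : ℝ) : ℂ))]
  apply Finset.sum_congr rfl
  intro k _
  have harg : (k:ℝ) - (N:ℝ)/2 = ((((k:ℤ) - (N:ℤ)/2) : ℤ) : ℝ) := by
    rw [half_int hNM, hNM]; push_cast; ring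
  rw [harg]

lemma vSeq_Ico (hNM : N = 2*M) (n : ℤ) :
    vSeq N p n = Complex.exp (-Real.pi * Complex.I * (n:ℂ) / N) *
      ∑ j ∈ Finset.Ico (-(M:ℤ)) (M:ℤ), ww N ^ (-(j*n)) * ((bspline p ((j:ℝ)+1/2) : ℝ) : ℂ) := by
  rw [vSeq, ← shift_to_Ico hNM (fun j => ww N ^ (-(j*n)) * ((bspline p ((j:ℝ)+1/2) : ℝ) : ℂ))]
  congr 1
  apply Finset.sum_congr rfl
  intro k _
  have harg : (k:ℝ) - (N:ℝ)/2 + 1/2 = ((((k:ℤ) - (N:ℤ)/2) : ℤ) : ℝ) + 1/2 := by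
    rw [half_int hNM, hNM]; push_cast; ring
  rw [harg]

lemma bhat1_Ico (hNM : N = 2*M) (n : ℤ) :
    bhat1 N p n = ∑ j ∈ Finset.Ico (-(M:ℤ)) (M:ℤ),
      ww N ^ (-(j*n)) * (((bspline p ((j:ℝ)/2) : ℝ) : ℂ)/2) := by
  rw [bhat1, shift_to_Ico hNM (fun j => ww N ^ (-(j*n)) * bs1 N p j)]
  apply Finset.sum_congr rfl
  intro j hj
  simp only [Finset.mem_Ico] at hj
  rw [bs1_eval hNM j hj.1 hj.2]

lemma phase_eq (hNM : N = 2*M) (hM0 : 0 < M) (n : ℤ) :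
    Complex.exp (-(Real.pi:ℂ) * Complex.I * (((2*n : ℤ)):ℂ) / N) = ww N ^ (-n) := by
  rw [ww, ← Complex.exp_int_mul]
  congr 1
  have hNC : (N:ℂ) ≠ 0 := Nat.cast_ne_zero.mpr (by omega)
  push_cast
  ring

lemma bhat1_eq (hNM : N = 2*M) (hp : 2 ≤ p) (hpM : p ≤ M) (n : ℤ) :
    bhat1 N p n = (uSeq N p (2*n) + vSeq N p (2*n))/2 := by
  have hM0 : 0 < M := by omega
  set K : ℤ := ((M:ℤ)+1)/2 with hK
  have hK1 : (M:ℤ) ≤ 2*K := by omega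
  have hK2 : 2*K ≤ (M:ℤ)+1 := by omega
  have hKM : K ≤ (M:ℤ) := by omega
  have hMr : (p:ℝ) ≤ (M:ℝ) := by exact_mod_cast hpM
  have hKr : (M:ℝ) ≤ 2*(K:ℝ) := by exact_mod_cast hK1
  have hpr : (2:ℝ) ≤ (p:ℝ) := by exact_mod_cast hp
  -- support facts
  have hb2 : ∀ j : ℤ, ((M:ℤ) ≤ j ∨ j ≤ -(M:ℤ)) → bspline p ((j:ℝ)/2) = 0 := by
    intro j hj
    rcases hj with hj | hj
    · apply bspline_zero_ge p hp
      have : (M:ℝ) ≤ (j:ℝ) := by exact_mod_cast hj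
      linarith
    · apply bspline_zero_le p hp
      have : (j:ℝ) ≤ -(M:ℝ) := by exact_mod_cast hj
      linarith
  have hb1 : ∀ j : ℤ, (K ≤ j ∨ j ≤ -K) → bspline p (j:ℝ) = 0 := by
    intro j hj
    rcases hj with hj | hj
    · apply bspline_zero_ge p hp
      have : (K:ℝ) ≤ (j:ℝ) := by exact_mod_cast hj
      linarith
    · apply bspline_zero_le p hp
      have : (j:ℝ) ≤ -(K:ℝ) := by exact_mod_cast hj
      linarith
  have hbh : ∀ j : ℤ, (K ≤ j ∨ j ≤ -K - 1) → bspline p ((j:ℝ)+1/2) = 0 := by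
    intro j hj
    rcases hj with hj | hj
    · apply bspline_zero_ge p hp
      have : (K:ℝ) ≤ (j:ℝ) := by exact_mod_cast hj
      linarith
    · apply bspline_zero_le p hp
      have : (j:ℝ) ≤ -(K:ℝ) - 1 := by exact_mod_cast hj
      linarith
  set f : ℤ → ℂ := fun j => ww N ^ (-(j*n)) * (((bspline p ((j:ℝ)/2) : ℝ) : ℂ)/2) with hf
  have step1 : bhat1 N p n = ∑ j ∈ Finset.Ico (-(M:ℤ)) (M:ℤ), f j := bhat1_Ico hNM n
  have step2 : ∑ j ∈ Finset.Ico (-(M:ℤ)) (M:ℤ), f j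
      = ∑ j ∈ Finset.Ico (2*(-K)) (2*K), f j := by
    apply Finset.sum_subset
    · apply Finset.Ico_subset_Ico <;> omega
    · intro j hjb hjs
      simp only [Finset.mem_Ico] at hjb hjs
      have : (M:ℤ) ≤ j ∨ j ≤ -(M:ℤ) := by omega
      rw [hf]
      simp only [hb2 j this]
      norm_num
  have step3 : ∑ j ∈ Finset.Ico (2*(-K)) (2*K), f j
      = (∑ i ∈ Finset.Ico (-K) K, f (2*i)) + ∑ i ∈ Finset.Ico (-K) K, f (2*i+1) := by
    rw [pair_Ico, Finset.sum_add_distrib]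
  have stepE : ∑ i ∈ Finset.Ico (-K) K, f (2*i)
      = (∑ j ∈ Finset.Ico (-(M:ℤ)) (M:ℤ),
          ww N ^ (-(j*(2*n))) * ((bspline p (j:ℝ) : ℝ) : ℂ)) / 2 := by
    rw [Finset.sum_div]
    rw [← Finset.sum_subset (Finset.Ico_subset_Ico (by omega) (by omega) :
        Finset.Ico (-K) K ⊆ Finset.Ico (-(M:ℤ)) (M:ℤ))]
    · apply Finset.sum_congr rfl
      intro i _
      have h1 : ((2*i:ℤ):ℝ)/2 = (i:ℝ) := by push_cast; ring
      have h2 : -((2*i)*n) = -(i*(2*n)) := by ring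
      show ww N ^ (-(2*i*n)) * (((bspline p (((2*i:ℤ):ℝ)/2) : ℝ) : ℂ)/2)
        = ww N ^ (-(i*(2*n))) * ((bspline p ((i:ℤ):ℝ) : ℝ) : ℂ) / 2
      rw [h1, h2]
      ring
    · intro j hjb hjs
      simp only [Finset.mem_Ico] at hjb hjs
      rw [hb1 j (by omega)]
      norm_num
  have stepO : ∑ i ∈ Finset.Ico (-K) K, f (2*i+1)
      = ww N ^ (-n) * (∑ j ∈ Finset.Ico (-(M:ℤ)) (M:ℤ),
          ww N ^ (-(j*(2*n))) * ((bspline p ((j:ℝ)+1/2) : ℝ) : ℂ)) / 2 := by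
    rw [mul_div_assoc, Finset.sum_div, Finset.mul_sum]
    rw [← Finset.sum_subset (Finset.Ico_subset_Ico (by omega) (by omega) :
        Finset.Ico (-K) K ⊆ Finset.Ico (-(M:ℤ)) (M:ℤ))]
    · apply Finset.sum_congr rfl
      intro i _
      have h1 : ((2*i+1:ℤ):ℝ)/2 = (i:ℝ)+1/2 := by push_cast; ring
      have h2 : -((2*i+1)*n) = -n + -(i*(2*n)) := by ring
      show ww N ^ (-((2*i+1)*n)) * (((bspline p (((2*i+1:ℤ):ℝ)/2) : ℝ) : ℂ)/2)
        = ww N ^ (-n) * (ww N ^ (-(i*(2*n))) * ((bspline p (((i:ℤ):ℝ)+1/2) : ℝ) : ℂ) / 2)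
      rw [h1, h2, zpow_add₀ (ww_ne_zero' (N:=N))]
      ring
    · intro j hjb hjs
      simp only [Finset.mem_Ico] at hjb hjs
      rw [hbh j (by omega)]
      norm_num
  rw [step1, step2, step3, stepE, stepO, uSeq_Ico hNM, vSeq_Ico hNM, phase_eq hNM hM0]
  ring

lemma uSeq_per (hNM : N = 2*M) (hM0 : 0 < M) (m : ℤ) : uSeq N p (m + N) = uSeq N p m := by
  have hN : 0 < N := by omega
  unfold uSeq
  apply Finset.sum_congr rfl
  intro k _
  congr 1
  set j : ℤ := (k:ℤ) - (N:ℤ)/2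
  rw [show -(j*(m+(N:ℤ))) = -(j*m) + (N:ℤ)*(-j) by ring, zpow_add₀ (ww_ne_zero' (N:=N)),
    zpow_mul, ww_pow_N N hN, one_zpow, mul_one]

lemma vSeq_antiper (hNM : N = 2*M) (hM0 : 0 < M) (m : ℤ) : vSeq N p (m + N) = -vSeq N p m := by
  have hN : 0 < N := by omega
  have hNC : (N:ℂ) ≠ 0 := Nat.cast_ne_zero.mpr (by omega)
  unfold vSeq
  have hsum : ∀ k ∈ Finset.range N,
      ww N ^ (-(((k : ℤ) - (N : ℤ) / 2) * (m+(N:ℤ)))) *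
        ((bspline p ((k : ℝ) - (N : ℝ) / 2 + 1 / 2) : ℝ) : ℂ)
      = ww N ^ (-(((k : ℤ) - (N : ℤ) / 2) * m)) *
        ((bspline p ((k : ℝ) - (N : ℝ) / 2 + 1 / 2) : ℝ) : ℂ) := by
    intro k _
    congr 1
    set j : ℤ := (k:ℤ) - (N:ℤ)/2
    rw [show -(j*(m+(N:ℤ))) = -(j*m) + (N:ℤ)*(-j) by ring, zpow_add₀ (ww_ne_zero' (N:=N)),
      zpow_mul, ww_pow_N N hN, one_zpow, mul_one]
  rw [Finset.sum_congr rfl hsum]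
  have hph : Complex.exp (-(Real.pi:ℂ) * Complex.I * (((m+(N:ℤ)):ℤ):ℂ) / N)
      = -Complex.exp (-(Real.pi:ℂ) * Complex.I * ((m:ℤ):ℂ) / N) := by
    have harg : -(Real.pi:ℂ) * Complex.I * (((m+(N:ℤ)):ℤ):ℂ) / N
        = (-(Real.pi:ℂ) * Complex.I * ((m:ℤ):ℂ) / N) + (-((Real.pi:ℂ) * Complex.I)) := by
      push_cast
      field_simp
      ring
    rw [harg, Complex.exp_add, Complex.exp_neg, Complex.exp_pi_mul_I]
    ring_nf
  push_cast at hph ⊢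
  rw [hph]
  ring

end C


section D
variable {N p M : ℕ} (hNM : N = 2*M) (hp : 2 ≤ p) (hpM : p ≤ M)
  (hpos : ∀ n : ℤ, 0 < uSeq N p (2 * n) ^ 2 + vSeq N p (2 * n) ^ 2)
include hNM hp hpM hpos

lemma ups_real (n : ℤ) :
    upsilon N p n = (((uSeq N p (2*n)^2 + vSeq N p (2*n)^2).re / 4 : ℝ) : ℂ)
      ∧ 0 < (uSeq N p (2*n)^2 + vSeq N p (2*n)^2).re := by
  have h := hpos n
  rw [Complex.lt_def] at h
  obtain ⟨hre, him⟩ := h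
  simp only [Complex.zero_re, Complex.zero_im] at hre him
  constructor
  · have hz : uSeq N p (2*n)^2 + vSeq N p (2*n)^2
        = (((uSeq N p (2*n)^2 + vSeq N p (2*n)^2).re : ℝ) : ℂ) := by
      apply Complex.ext <;> simp [← him]
    rw [upsilon]
    conv_lhs => rw [hz]
    push_cast
    ring
  · exact hre

lemma sqrt_ups (n : ℤ) :
    upsilon N p n ^ ((1:ℂ)/2)
      = ((((uSeq N p (2*n)^2 + vSeq N p (2*n)^2).re / 4) ^ ((1:ℝ)/2) : ℝ) : ℂ) := by
  obtain ⟨h1, h2⟩ := ups_real hNM hp hpM hpos n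
  rw [h1, show ((1:ℂ)/2) = (((1:ℝ)/2 : ℝ) : ℂ) by norm_num,
    ← Complex.ofReal_cpow (by linarith)]

lemma sqrt_ups_sq (n : ℤ) :
    (upsilon N p n ^ ((1:ℂ)/2)) ^ 2 = upsilon N p n := by
  obtain ⟨h1, h2⟩ := ups_real hNM hp hpM hpos n
  rw [sqrt_ups hNM hp hpM hpos n, h1]
  set r : ℝ := (uSeq N p (2*n)^2 + vSeq N p (2*n)^2).re / 4 with hr
  have hr0 : 0 < r := by rw [hr]; linarith
  have : (r ^ ((1:ℝ)/2)) ^ 2 = r := by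
    rw [← Real.rpow_natCast (r ^ ((1:ℝ)/2)) 2, ← Real.rpow_mul hr0.le]
    norm_num
  rw [← Complex.ofReal_pow, this]

lemma sqrt_ups_ne (n : ℤ) : upsilon N p n ^ ((1:ℂ)/2) ≠ 0 := by
  obtain ⟨h1, h2⟩ := ups_real hNM hp hpM hpos n
  rw [sqrt_ups hNM hp hpM hpos n]
  have : 0 < ((uSeq N p (2*n)^2 + vSeq N p (2*n)^2).re / 4) ^ ((1:ℝ)/2) :=
    Real.rpow_pos_of_pos (by linarith) _
  exact_mod_cast this.ne'

lemma sqrt_ups_conj (n : ℤ) :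
    (starRingEnd ℂ) (upsilon N p n ^ ((1:ℂ)/2)) = upsilon N p n ^ ((1:ℂ)/2) := by
  rw [sqrt_ups hNM hp hpM hpos n, Complex.conj_ofReal]

lemma bhat1_conj (n : ℤ) : (starRingEnd ℂ) (bhat1 N p n) = bhat1 N p n := by
  have hM0 : 0 < M := by omega
  rw [bhat1_Ico hNM n, map_sum]
  have hterm : ∀ j ∈ Finset.Ico (-(M:ℤ)) (M:ℤ),
      (starRingEnd ℂ) (ww N ^ (-(j*n)) * (((bspline p ((j:ℝ)/2) : ℝ) : ℂ)/2))
      = ww N ^ (j*n) * (((bspline p ((j:ℝ)/2) : ℝ) : ℂ)/2) := by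
    intro j _
    rw [map_mul, conj_ww_zpow, neg_neg, map_div₀, Complex.conj_ofReal, map_ofNat]
  rw [Finset.sum_congr rfl hterm]
  set g : ℤ → ℂ := fun j => ww N ^ (j*n) * (((bspline p ((j:ℝ)/2) : ℝ) : ℂ)/2) with hg
  set f : ℤ → ℂ := fun j => ww N ^ (-(j*n)) * (((bspline p ((j:ℝ)/2) : ℝ) : ℂ)/2) with hf
  have claim1 : ∑ j ∈ Finset.Ico (-(M:ℤ)) (M:ℤ), g j
      = ∑ j ∈ Finset.Ico (-(M:ℤ)+1) ((M:ℤ)+1), g (-j) := by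
    apply Finset.sum_nbij' (i := fun (z:ℤ) => -z) (j := fun (z:ℤ) => -z)
    · intro a ha; simp only [Finset.mem_Ico] at *; omega
    · intro a ha; simp only [Finset.mem_Ico] at *; omega
    · intro a _; omega
    · intro a _; omega
    · intro a _; rw [neg_neg]
  have hgf : ∀ j : ℤ, g (-j) = f j := by
    intro j
    show ww N ^ ((-j)*n) * (((bspline p (((-j:ℤ):ℝ)/2) : ℝ) : ℂ)/2)
      = ww N ^ (-(j*n)) * (((bspline p ((j:ℝ)/2) : ℝ) : ℂ)/2)
    have h1 : (((-j:ℤ):ℝ))/2 = -((j:ℝ)/2) := by push_cast; ring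
    have h2 : (-j)*n = -(j*n) := by ring
    rw [h1, h2, bspline_neg p hp]
  have claim2 : ∑ j ∈ Finset.Ico (-(M:ℤ)+1) ((M:ℤ)+1), g (-j)
      = ∑ j ∈ Finset.Ico (-(M:ℤ)+1) ((M:ℤ)+1), f j :=
    Finset.sum_congr rfl (fun j _ => hgf j)
  have hf0 : ∀ j : ℤ, ((M:ℤ) ≤ j ∨ j ≤ -(M:ℤ)) → f j = 0 := by
    intro j hj
    simp only [hf]
    have hpMr : (p:ℝ) ≤ (M:ℝ) := by exact_mod_cast hpM
    have hz : bspline p ((j:ℝ)/2) = 0 := by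
      rcases hj with hj|hj
      · apply bspline_zero_ge p hp
        have : (M:ℝ) ≤ (j:ℝ) := by exact_mod_cast hj
        linarith
      · apply bspline_zero_le p hp
        have : (j:ℝ) ≤ -(M:ℝ) := by exact_mod_cast hj
        linarith
    rw [hz]
    norm_num
  have hfM : f (M:ℤ) = 0 := hf0 (M:ℤ) (Or.inl le_rfl)
  have hfM' : f (-(M:ℤ)) = 0 := hf0 (-(M:ℤ)) (Or.inr le_rfl)
  have claim3 : ∑ j ∈ Finset.Ico (-(M:ℤ)+1) ((M:ℤ)+1), f j
      = ∑ j ∈ Finset.Ico (-(M:ℤ)) (M:ℤ), f j := by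
    rw [sum_Ico_top _ _ (by omega), hfM, add_zero,
      sum_Ico_bot (-(M:ℤ)) (M:ℤ) (by omega), hfM', zero_add]
  rw [claim1, claim2, claim3]

lemma betaS_conj (n : ℤ) : (starRingEnd ℂ) (betaS N p n) = betaS N p n := by
  rw [betaS, map_div₀, bhat1_conj hNM hp hpM hpos, sqrt_ups_conj hNM hp hpM hpos]

lemma ups_shift (n : ℤ) : upsilon N p (n + M) = upsilon N p n := by
  have hM0 : 0 < M := by omega
  rw [upsilon, upsilon, show 2*(n+(M:ℤ)) = 2*n + (N:ℤ) by rw [hNM]; push_cast; ring,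
    uSeq_per hNM hM0, vSeq_antiper hNM hM0]
  ring

lemma bhat1_shift (n : ℤ) :
    bhat1 N p (n + M) = (uSeq N p (2*n) - vSeq N p (2*n))/2 := by
  have hM0 : 0 < M := by omega
  rw [bhat1_eq hNM hp hpM, show 2*(n+(M:ℤ)) = 2*n + (N:ℤ) by rw [hNM]; push_cast; ring,
    uSeq_per hNM hM0, vSeq_antiper hNM hM0]
  ring

lemma bhat1_per (n : ℤ) : bhat1 N p (n + N) = bhat1 N p n := by
  have hM0 : 0 < M := by omega
  rw [bhat1_eq hNM hp hpM, bhat1_eq hNM hp hpM,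
    show 2*(n+(N:ℤ)) = (2*n + (N:ℤ)) + (N:ℤ) by ring,
    uSeq_per hNM hM0, vSeq_antiper hNM hM0, uSeq_per hNM hM0, vSeq_antiper hNM hM0]
  ring

lemma ups_per (n : ℤ) : upsilon N p (n + N) = upsilon N p n := by
  rw [show n + (N:ℤ) = (n + M) + M by rw [hNM]; push_cast; ring,
    ups_shift hNM hp hpM hpos, ups_shift hNM hp hpM hpos]

lemma betaS_per (n : ℤ) : betaS N p (n + N) = betaS N p n := by
  rw [betaS, betaS, bhat1_per hNM hp hpM hpos, ups_per hNM hp hpM hpos]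

lemma betaS_sq (n : ℤ) : betaS N p n ^ 2 + betaS N p (n + M) ^ 2 = 2 := by
  have hM0 : 0 < M := by omega
  have hUne : upsilon N p n ≠ 0 := by
    obtain ⟨h1, h2⟩ := ups_real hNM hp hpM hpos n
    rw [h1]
    intro hc
    rw [Complex.ofReal_eq_zero] at hc
    linarith
  have hs2 := sqrt_ups_sq hNM hp hpM hpos n
  have hnum : bhat1 N p n ^ 2 + bhat1 N p (n + M) ^ 2 = 2 * upsilon N p n := by
    rw [bhat1_eq hNM hp hpM, bhat1_shift hNM hp hpM hpos, upsilon]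
    ring
  rw [betaS, betaS, ups_shift hNM hp hpM hpos, div_pow, div_pow, ← add_div, hs2, hnum]
  field_simp

end D



noncomputable def psih (N p lam : ℕ) (n : ℕ) : ℂ := if lam = 0 then betaS N p n else alphaS N p n

lemma psi1_eq (N p lam : ℕ) (k : ℤ) :
    psi1 N p lam k = (N:ℂ)⁻¹ * ∑ n ∈ Finset.range N, psih N p lam n * ww N ^ (k * (n:ℤ)) := rfl

lemma dvd_small (N : ℕ) (hN : 0 < N) {a b : ℕ} (ha : a < N) (hb : b < N) :
    ((N:ℤ) ∣ ((a:ℤ) - (b:ℤ))) ↔ a = b := by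
  constructor
  · rintro ⟨c, hc⟩
    have h1 : -(N:ℤ) < (a:ℤ) - b := by omega
    have h2 : (a:ℤ) - b < N := by omega
    rw [hc] at h1 h2
    have hN' : (0:ℤ) < N := by exact_mod_cast hN
    have hc1 : c < 1 := by
      by_contra h
      push_neg at h
      nlinarith
    have hc2 : -1 < c := by
      by_contra h
      push_neg at h
      nlinarith
    have hc0 : c = 0 := by omega
    rw [hc0, mul_zero] at hc
    omega
  · rintro rfl
    simp

lemma dvd_mod (N : ℕ) (hN : 0 < N) (k : ℤ) (j : ℕ) (hj : j < N) :
    ((N:ℤ) ∣ (k - (j:ℤ))) ↔ (j:ℤ) = k % (N:ℤ) := by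
  constructor
  · rintro ⟨c, hc⟩
    have hk : k = (j:ℤ) + (N:ℤ)*c := by linarith
    rw [hk, Int.add_mul_emod_self_left, Int.emod_eq_of_lt (by positivity) (by exact_mod_cast hj)]
  · intro h
    exact ⟨k / N, by rw [h, Int.emod_def]; ring⟩

lemma x_mod (N : ℕ) (hN : 0 < N) (x : ℤ → ℂ) (hper : ∀ k : ℤ, x (k + N) = x k) (k : ℤ) :
    x (k % (N:ℤ)) = x k := by
  have hPer : Function.Periodic x (N:ℤ) := hper
  calc x (k % (N:ℤ)) = x (k + (-(k/(N:ℤ))) * N) := by congr 1; rw [Int.emod_def]; ring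
    _ = x k := (hPer.int_mul _) k

lemma dft_inv (N : ℕ) (hN : 0 < N) (x : ℤ → ℂ) (hper : ∀ k : ℤ, x (k + N) = x k) (k : ℤ) :
    (N:ℂ)⁻¹ * ∑ n ∈ Finset.range N, dft N x n * ww N ^ (k * (n:ℤ)) = x k := by
  have hNC : (N:ℂ) ≠ 0 := Nat.cast_ne_zero.mpr hN.ne'
  have step1 : ∀ n ∈ Finset.range N, dft N x n * ww N ^ (k * (n:ℤ))
      = ∑ j ∈ Finset.range N, x j * ww N ^ ((n:ℤ) * (k - (j:ℤ))) := by
    intro n _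
    rw [dft, Finset.sum_mul]
    apply Finset.sum_congr rfl
    intro j _
    rw [mul_comm (ww N ^ (-((j:ℤ) * (n:ℤ)))) (x j), mul_assoc, ← zpow_add₀ (ww_ne_zero N)]
    congr 2
    ring
  rw [Finset.sum_congr rfl step1, Finset.sum_comm]
  have step2 : ∀ j ∈ Finset.range N,
      ∑ n ∈ Finset.range N, x j * ww N ^ ((n:ℤ) * (k - (j:ℤ)))
      = x j * (if (N:ℤ) ∣ (k - (j:ℤ)) then (N:ℂ) else 0) := by
    intro j _
    rw [← Finset.mul_sum, sum_ww N hN]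
  rw [Finset.sum_congr rfl step2]
  have hj0 : ((k % (N:ℤ)).toNat) ∈ Finset.range N := by
    simp only [Finset.mem_range]
    have h1 : 0 ≤ k % (N:ℤ) := Int.emod_nonneg k (by exact_mod_cast hN.ne')
    have h2 : k % (N:ℤ) < N := Int.emod_lt_of_pos k (by exact_mod_cast hN)
    omega
  have step3 : ∀ j ∈ Finset.range N,
      x j * (if (N:ℤ) ∣ (k - (j:ℤ)) then (N:ℂ) else 0)
      = if j = (k % (N:ℤ)).toNat then x j * N else 0 := by
    intro j hj
    simp only [Finset.mem_range] at hj
    have h1 : 0 ≤ k % (N:ℤ) := Int.emod_nonneg k (by exact_mod_cast hN.ne')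
    have hcond : ((N:ℤ) ∣ (k - (j:ℤ))) ↔ j = (k % (N:ℤ)).toNat := by
      rw [dvd_mod N hN k j hj]
      omega
    by_cases h : j = (k % (N:ℤ)).toNat
    · rw [if_pos h, if_pos (hcond.mpr h)]
    · rw [if_neg h, if_neg (fun hc => h (hcond.mp hc)), mul_zero]
  rw [Finset.sum_congr rfl step3, Finset.sum_ite_eq' (Finset.range N) ((k % (N:ℤ)).toNat)
    (fun j => x j * N), if_pos hj0]
  have h1 : 0 ≤ k % (N:ℤ) := Int.emod_nonneg k (by exact_mod_cast hN.ne')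
  have hx : x (((k % (N:ℤ)).toNat : ℤ)) = x k := by
    rw [Int.toNat_of_nonneg h1]
    exact x_mod N hN x hper k
  rw [hx]
  field_simp

lemma dft_psi1 (N p lam : ℕ) (hN : 0 < N) (m : ℕ) (hm : m < N) :
    dft N (psi1 N p lam) m = psih N p lam m := by
  have hNC : (N:ℂ) ≠ 0 := Nat.cast_ne_zero.mpr hN.ne'
  rw [dft]
  have step1 : ∀ j ∈ Finset.range N,
      ww N ^ (-((j:ℤ) * (m:ℤ))) * psi1 N p lam j
      = ∑ n ∈ Finset.range N, (N:ℂ)⁻¹ * psih N p lam n * ww N ^ ((j:ℤ) * ((n:ℤ) - (m:ℤ))) := by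
    intro j _
    rw [psi1_eq, Finset.mul_sum, Finset.mul_sum]
    apply Finset.sum_congr rfl
    intro n _
    have e1 : ww N ^ (-((j:ℤ)*(m:ℤ))) * ((N:ℂ)⁻¹ * (psih N p lam n * ww N ^ ((j:ℤ)*(n:ℤ))))
        = (N:ℂ)⁻¹ * psih N p lam n * (ww N ^ ((j:ℤ)*(n:ℤ)) * ww N ^ (-((j:ℤ)*(m:ℤ)))) := by
      ring
    rw [e1, ← zpow_add₀ (ww_ne_zero N)]
    congr 1
    ring
  rw [Finset.sum_congr rfl step1, Finset.sum_comm]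
  have step2 : ∀ n ∈ Finset.range N,
      ∑ j ∈ Finset.range N, (N:ℂ)⁻¹ * psih N p lam n * ww N ^ ((j:ℤ) * ((n:ℤ) - (m:ℤ)))
      = if n = m then psih N p lam n else 0 := by
    intro n hn
    rw [← Finset.mul_sum, sum_ww N hN ((n:ℤ)-(m:ℤ))]
    simp only [Finset.mem_range] at hn
    by_cases h : n = m
    · rw [if_pos ((dvd_small N hN hn hm).mpr h), if_pos h]
      field_simp
    · rw [if_neg (fun hc => h ((dvd_small N hN hn hm).mp hc)), if_neg h, mul_zero]
  rw [Finset.sum_congr rfl step2,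
    Finset.sum_ite_eq' (Finset.range N) m (fun n => psih N p lam n),
    if_pos (Finset.mem_range.mpr hm)]


noncomputable def mP (M : ℕ) (n : ℕ) : ℂ :=
  if n = 0 ∨ n = M then 1 else if n < M then -Complex.I else Complex.I
noncomputable def cH (N M : ℕ) (n : ℕ) : ℂ :=
  if 0 < n ∧ n < M then -Complex.I else if M < n ∧ n < N then Complex.I else 0
noncomputable def gg (N p M : ℕ) (s : ℂ) (lam n : ℕ) : ℂ :=
  (1 + s * (Complex.I * mP M n)) * psih N p lam n
def sig (M n : ℕ) : ℕ := if n < M then n + M else n - M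

lemma psih_zero (N p n : ℕ) : psih N p 0 n = betaS N p n := rfl
lemma psih_one (N p n : ℕ) : psih N p 1 n = alphaS N p n := rfl

lemma hilbertT_eq (N M : ℕ) (hNM : N = 2*M) (x : ℤ → ℂ) (k : ℤ) :
    hilbertT N x k = (N:ℂ)⁻¹ * ∑ n ∈ Finset.range N,
      cH N M n * dft N x n * ww N ^ (k * (n:ℤ)) := by
  rw [hilbertT]
  simp only [show N / 2 = M from by omega, cH]

lemma cwpT_eq (N p M lam : ℕ) (hNM : N = 2*M) (hM0 : 0 < M) (j : ℤ) :
    cwpT N (psi1 N p lam) j = (N:ℂ)⁻¹ * ∑ n ∈ Finset.range N,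
      mP M n * psih N p lam n * ww N ^ (j * (n:ℤ)) := by
  have hN : 0 < N := by omega
  rw [cwpT]
  simp only [show N / 2 = M from by omega]
  congr 1
  apply Finset.sum_congr rfl
  intro n hn
  rw [dft_psi1 N p lam hN n (Finset.mem_range.mp hn)]
  simp only [mP]

lemma qS_eq (N p M lam : ℕ) (hNM : N = 2*M) (hM0 : 0 < M) (s : ℂ) (j : ℤ) :
    psi1 N p lam j + s * (Complex.I * cwpT N (psi1 N p lam) j)
      = (N:ℂ)⁻¹ * ∑ n ∈ Finset.range N, gg N p M s lam n * ww N ^ (j * (n:ℤ)) := by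
  rw [psi1_eq, cwpT_eq N p M lam hNM hM0 j]
  set A := ∑ n ∈ Finset.range N, psih N p lam n * ww N ^ (j * (n:ℤ)) with hA
  set B := ∑ n ∈ Finset.range N, mP M n * psih N p lam n * ww N ^ (j * (n:ℤ)) with hB
  set C := ∑ n ∈ Finset.range N, gg N p M s lam n * ww N ^ (j * (n:ℤ)) with hC
  have hABC : A + s * Complex.I * B = C := by
    rw [hA, hB, hC, Finset.mul_sum, ← Finset.sum_add_distrib]
    apply Finset.sum_congr rfl
    intro n _
    simp only [gg]
    ring
  calc (N:ℂ)⁻¹ * A + s * (Complex.I * ((N:ℂ)⁻¹ * B))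
      = (N:ℂ)⁻¹ * (A + s * Complex.I * B) := by ring
    _ = (N:ℂ)⁻¹ * C := by rw [hABC]

lemma inner_shift (N : ℕ) (hN : 0 < N) (x : ℤ → ℂ) (c : ℕ → ℂ) (a : ℤ) :
    inner1 N x (fun j => (N:ℂ)⁻¹ * ∑ n ∈ Finset.range N, c n * ww N ^ ((j - a) * (n:ℤ)))
      = (N:ℂ)⁻¹ * ∑ n ∈ Finset.range N,
          (starRingEnd ℂ) (c n) * dft N x n * ww N ^ (a * (n:ℤ)) := by
  have hw := ww_ne_zero N
  rw [inner1]
  have step1 : ∀ j ∈ Finset.range N,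
      x j * (starRingEnd ℂ) ((N:ℂ)⁻¹ * ∑ n ∈ Finset.range N, c n * ww N ^ (((j:ℤ) - a) * (n:ℤ)))
      = ∑ n ∈ Finset.range N, (N:ℂ)⁻¹ *
          ((starRingEnd ℂ) (c n) * ww N ^ (a * (n:ℤ)) * (ww N ^ (-((j:ℤ) * (n:ℤ))) * x j)) := by
    intro j _
    rw [map_mul, map_sum]
    have hconjN : (starRingEnd ℂ) ((N:ℂ)⁻¹) = (N:ℂ)⁻¹ := by
      rw [map_inv₀, map_natCast]
    rw [hconjN, Finset.mul_sum, Finset.mul_sum]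
    apply Finset.sum_congr rfl
    intro n _
    rw [map_mul, conj_ww_zpow]
    have he : -(((j:ℤ) - a) * (n:ℤ)) = a * (n:ℤ) + -((j:ℤ) * (n:ℤ)) := by ring
    rw [he, zpow_add₀ hw]
    ring
  rw [Finset.sum_congr rfl step1, Finset.sum_comm, Finset.mul_sum]
  apply Finset.sum_congr rfl
  intro n _
  rw [← Finset.mul_sum, ← Finset.mul_sum, dft]
  ring

lemma sum_pair (N M : ℕ) (hNM : N = 2*M) (hM0 : 0 < M) (F : ℕ → ℂ) (n : ℕ) (hn : n < N) :
    ∑ m ∈ Finset.range N, (if (M:ℤ) ∣ ((n:ℤ) - (m:ℤ)) then F m else 0)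
      = F n + F (sig M n) := by
  have hfilter : Finset.filter (fun (m : ℕ) => (M:ℤ) ∣ ((n:ℤ) - (m:ℤ))) (Finset.range N)
      = {n, sig M n} := by
    ext m
    simp only [Finset.mem_filter, Finset.mem_range, Finset.mem_insert, Finset.mem_singleton]
    constructor
    · rintro ⟨hm, c, hc⟩
      have hMp : (0:ℤ) < M := by exact_mod_cast hM0
      have hb1 : -(2*(M:ℤ)) < (n:ℤ) - m := by omega
      have hb2 : (n:ℤ) - m < 2*M := by omega
      rw [hc] at hb1 hb2
      have hc2 : c < 2 := by by_contra h; push_neg at h; nlinarith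
      have hc3 : -2 < c := by by_contra h; push_neg at h; nlinarith
      interval_cases c
      · right; simp only [sig]; split_ifs <;> omega
      · left; omega
      · right; simp only [sig]; split_ifs <;> omega
    · intro h
      rcases h with rfl | rfl
      · exact ⟨hn, 0, by ring⟩
      · simp only [sig]
        split_ifs with h
        · refine ⟨by omega, -1, by omega⟩
        · refine ⟨by omega, 1, by omega⟩
  have hne : n ≠ sig M n := by
    simp only [sig]; split_ifs <;> omega
  rw [← Finset.sum_filter, hfilter, Finset.sum_pair hne]

lemma frame_lam (N p M : ℕ) (hNM : N = 2*M) (hM0 : 0 < M) (x : ℤ → ℂ) (s : ℂ)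
    (lam : ℕ) (k : ℤ) :
    ∑ l ∈ Finset.range M,
      inner1 N x (fun j => psi1 N p lam (j - 2*(l:ℤ))
          + s * (Complex.I * cwpT N (psi1 N p lam) (j - 2*(l:ℤ))))
        * (psi1 N p lam (k - 2*(l:ℤ)) + s * (Complex.I * cwpT N (psi1 N p lam) (k - 2*(l:ℤ))))
    = ∑ n ∈ Finset.range N, (N:ℂ)⁻¹ * (2:ℂ)⁻¹ * ((starRingEnd ℂ) (gg N p M s lam n) * dft N x n *
        (gg N p M s lam n * ww N ^ (k * (n:ℤ))
          + gg N p M s lam (sig M n) * ww N ^ (k * ((sig M n : ℕ):ℤ)))) := by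
  have hN : 0 < N := by omega
  have hw := ww_ne_zero N
  have hNC : (N:ℂ) ≠ 0 := Nat.cast_ne_zero.mpr hN.ne'
  have hMC : (M:ℂ) ≠ 0 := Nat.cast_ne_zero.mpr hM0.ne'
  have hQ : ∀ j : ℤ, psi1 N p lam j + s * (Complex.I * cwpT N (psi1 N p lam) j)
      = (N:ℂ)⁻¹ * ∑ n ∈ Finset.range N, gg N p M s lam n * ww N ^ (j * (n:ℤ)) :=
    qS_eq N p M lam hNM hM0 s
  have hIn : ∀ l : ℕ, inner1 N x (fun j => psi1 N p lam (j - 2*(l:ℤ))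
        + s * (Complex.I * cwpT N (psi1 N p lam) (j - 2*(l:ℤ))))
      = (N:ℂ)⁻¹ * ∑ n ∈ Finset.range N,
          (starRingEnd ℂ) (gg N p M s lam n) * dft N x n * ww N ^ ((2*(l:ℤ)) * (n:ℤ)) := by
    intro l
    have hfun : (fun j => psi1 N p lam (j - 2*(l:ℤ))
          + s * (Complex.I * cwpT N (psi1 N p lam) (j - 2*(l:ℤ))))
        = fun j => (N:ℂ)⁻¹ * ∑ n ∈ Finset.range N,
            gg N p M s lam n * ww N ^ ((j - 2*(l:ℤ)) * (n:ℤ)) := by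
      funext j; exact hQ (j - 2*(l:ℤ))
    rw [hfun, inner_shift N hN x _ (2*(l:ℤ))]
  have step1 : ∀ l ∈ Finset.range M,
      inner1 N x (fun j => psi1 N p lam (j - 2*(l:ℤ))
          + s * (Complex.I * cwpT N (psi1 N p lam) (j - 2*(l:ℤ))))
        * (psi1 N p lam (k - 2*(l:ℤ)) + s * (Complex.I * cwpT N (psi1 N p lam) (k - 2*(l:ℤ))))
      = ∑ n ∈ Finset.range N, ∑ m ∈ Finset.range N,
          ((N:ℂ)⁻¹ * (N:ℂ)⁻¹ * ((starRingEnd ℂ) (gg N p M s lam n) * dft N x n)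
              * (gg N p M s lam m * ww N ^ (k * (m:ℤ))))
            * ww N ^ (2*(l:ℤ)*((n:ℤ)-(m:ℤ))) := by
    intro l _
    rw [hIn l, hQ (k - 2*(l:ℤ)), Finset.mul_sum, Finset.mul_sum, Finset.sum_mul_sum]
    apply Finset.sum_congr rfl
    intro n _
    apply Finset.sum_congr rfl
    intro m _
    have hz : ww N ^ ((2*(l:ℤ))*(n:ℤ)) * ww N ^ ((k - 2*(l:ℤ))*(m:ℤ))
        = ww N ^ (k*(m:ℤ)) * ww N ^ (2*(l:ℤ)*((n:ℤ)-(m:ℤ))) := by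
      rw [← zpow_add₀ hw, ← zpow_add₀ hw]
      congr 1
      ring
    calc ((N:ℂ)⁻¹ * ((starRingEnd ℂ) (gg N p M s lam n) * dft N x n * ww N ^ ((2*(l:ℤ)) * (n:ℤ))))
          * ((N:ℂ)⁻¹ * (gg N p M s lam m * ww N ^ ((k - 2*(l:ℤ)) * (m:ℤ))))
        = ((N:ℂ)⁻¹ * (N:ℂ)⁻¹ * ((starRingEnd ℂ) (gg N p M s lam n) * dft N x n)
            * gg N p M s lam m)
          * (ww N ^ ((2*(l:ℤ))*(n:ℤ)) * ww N ^ ((k - 2*(l:ℤ))*(m:ℤ))) := by ring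
      _ = ((N:ℂ)⁻¹ * (N:ℂ)⁻¹ * ((starRingEnd ℂ) (gg N p M s lam n) * dft N x n)
              * (gg N p M s lam m * ww N ^ (k * (m:ℤ))))
            * ww N ^ (2*(l:ℤ)*((n:ℤ)-(m:ℤ))) := by rw [hz]; ring
  rw [Finset.sum_congr rfl step1, Finset.sum_comm]
  apply Finset.sum_congr rfl
  intro n hn
  rw [Finset.sum_comm]
  have step2 : ∀ m ∈ Finset.range N,
      ∑ l ∈ Finset.range M,
        ((N:ℂ)⁻¹ * (N:ℂ)⁻¹ * ((starRingEnd ℂ) (gg N p M s lam n) * dft N x n)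
            * (gg N p M s lam m * ww N ^ (k * (m:ℤ))))
          * ww N ^ (2*(l:ℤ)*((n:ℤ)-(m:ℤ)))
      = if (M:ℤ) ∣ ((n:ℤ)-(m:ℤ)) then
          ((N:ℂ)⁻¹ * (N:ℂ)⁻¹ * ((starRingEnd ℂ) (gg N p M s lam n) * dft N x n)
            * (gg N p M s lam m * ww N ^ (k * (m:ℤ)))) * M else 0 := by
    intro m _
    rw [← Finset.mul_sum, sum_ww_half N M hNM hM0 ((n:ℤ)-(m:ℤ))]
    by_cases h : (M:ℤ) ∣ ((n:ℤ)-(m:ℤ))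
    · rw [if_pos h, if_pos h]
    · rw [if_neg h, if_neg h, mul_zero]
  rw [Finset.sum_congr rfl step2,
    sum_pair N M hNM hM0 (fun m =>
      ((N:ℂ)⁻¹ * (N:ℂ)⁻¹ * ((starRingEnd ℂ) (gg N p M s lam n) * dft N x n)
        * (gg N p M s lam m * ww N ^ (k * (m:ℤ)))) * M) n (Finset.mem_range.mp hn)]
  have h2M : (N:ℂ) = 2*(M:ℂ) := by rw [hNM]; push_cast; ring
  rw [h2M]
  field_simp


lemma psih_diag (N p M : ℕ) (hNM : N = 2*M) (hp : 2 ≤ p) (hpM : p ≤ M)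
    (hpos : ∀ n : ℤ, 0 < uSeq N p (2*n)^2 + vSeq N p (2*n)^2) (n : ℕ) :
    (starRingEnd ℂ) (psih N p 0 n) * psih N p 0 n
      + (starRingEnd ℂ) (psih N p 1 n) * psih N p 1 n = 2 := by
  have hM0 : 0 < M := by omega
  have hw := ww_ne_zero N
  rw [psih_zero, psih_one]
  simp only [alphaS]
  rw [half_int hNM]
  rw [map_mul, conj_ww_zpow, betaS_conj hNM hp hpM hpos, betaS_conj hNM hp hpM hpos]
  have hww : ww N ^ (-(n:ℤ)) * ww N ^ ((n:ℤ)) = 1 := by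
    rw [← zpow_add₀ hw]
    norm_num
  have hsq := betaS_sq hNM hp hpM hpos (n:ℤ)
  linear_combination hsq + (betaS N p ((n:ℤ)+(M:ℤ)) * betaS N p ((n:ℤ)+(M:ℤ))) * hww

lemma psih_cross (N p M : ℕ) (hNM : N = 2*M) (hp : 2 ≤ p) (hpM : p ≤ M)
    (hpos : ∀ n : ℤ, 0 < uSeq N p (2*n)^2 + vSeq N p (2*n)^2) (n : ℕ) (hn : n < N) :
    (starRingEnd ℂ) (psih N p 0 n) * psih N p 0 (sig M n)
      + (starRingEnd ℂ) (psih N p 1 n) * psih N p 1 (sig M n) = 0 := by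
  have hM0 : 0 < M := by omega
  have hw := ww_ne_zero N
  rw [psih_zero, psih_one, psih_zero, psih_one]
  simp only [alphaS]
  rw [half_int hNM]
  rw [map_mul, conj_ww_zpow, betaS_conj hNM hp hpM hpos, betaS_conj hNM hp hpM hpos]
  by_cases h : n < M
  · have hsig : ((sig M n : ℕ):ℤ) = (n:ℤ) + M := by
      simp only [sig, if_pos h]; push_cast; ring
    rw [hsig]
    have hper2 : betaS N p ((n:ℤ) + M + M) = betaS N p (n:ℤ) := by
      rw [show (n:ℤ) + (M:ℤ) + M = (n:ℤ) + (N:ℤ) from by rw [hNM]; push_cast; ring]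
      exact betaS_per hNM hp hpM hpos (n:ℤ)
    rw [hper2]
    have hww : ww N ^ (-(n:ℤ)) * ww N ^ ((n:ℤ)+(M:ℤ)) = -1 := by
      rw [← zpow_add₀ hw, show -(n:ℤ) + ((n:ℤ)+(M:ℤ)) = (M:ℤ) from by ring,
        ww_pow_half N M hNM hM0]
    linear_combination (betaS N p ((n:ℤ)+(M:ℤ)) * betaS N p (n:ℤ)) * hww
  · have hsig : ((sig M n : ℕ):ℤ) = (n:ℤ) - M := by
      simp only [sig, if_neg h]; omega
    rw [hsig]
    have hper2 : betaS N p ((n:ℤ) - M + M) = betaS N p (n:ℤ) := by norm_num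
    have hper3 : betaS N p ((n:ℤ) + M) = betaS N p ((n:ℤ) - M) := by
      rw [show (n:ℤ) + (M:ℤ) = ((n:ℤ) - M) + (N:ℤ) from by rw [hNM]; push_cast; ring]
      exact betaS_per hNM hp hpM hpos ((n:ℤ) - M)
    rw [hper2, hper3]
    have hww : ww N ^ (-(n:ℤ)) * ww N ^ ((n:ℤ)-(M:ℤ)) = -1 := by
      rw [← zpow_add₀ hw, show -(n:ℤ) + ((n:ℤ)-(M:ℤ)) = -(M:ℤ) from by ring, zpow_neg,
        ww_pow_half N M hNM hM0]
      norm_num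
    linear_combination (betaS N p ((n:ℤ)-(M:ℤ)) * betaS N p (n:ℤ)) * hww

lemma gg_diag (N p M : ℕ) (hNM : N = 2*M) (hp : 2 ≤ p) (hpM : p ≤ M)
    (hpos : ∀ n : ℤ, 0 < uSeq N p (2*n)^2 + vSeq N p (2*n)^2)
    (s : ℂ) (hs : s = 1 ∨ s = -1) (n : ℕ) (hn : n < N) :
    (starRingEnd ℂ) (gg N p M s 0 n) * gg N p M s 0 n
      + (starRingEnd ℂ) (gg N p M s 1 n) * gg N p M s 1 n
      = 4 + 4*s*(Complex.I * cH N M n) := by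
  have hψ := psih_diag N p M hNM hp hpM hpos n
  have factored : (starRingEnd ℂ) (gg N p M s 0 n) * gg N p M s 0 n
      + (starRingEnd ℂ) (gg N p M s 1 n) * gg N p M s 1 n
      = ((starRingEnd ℂ) (1 + s*(Complex.I * mP M n)) * (1 + s*(Complex.I * mP M n)))
        * ((starRingEnd ℂ) (psih N p 0 n) * psih N p 0 n
           + (starRingEnd ℂ) (psih N p 1 n) * psih N p 1 n) := by
    simp only [gg, map_mul]
    ring
  rw [factored, hψ]
  rcases hs with rfl | rfl <;>
    (simp only [mP, cH];
     split_ifs <;>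
       first
         | (exfalso; omega)
         | (simp only [map_add, map_one, map_mul, Complex.conj_I, map_neg]; ring_nf;
            try simp [Complex.I_sq]; try ring_nf))

lemma gg_cross (N p M : ℕ) (hNM : N = 2*M) (hp : 2 ≤ p) (hpM : p ≤ M)
    (hpos : ∀ n : ℤ, 0 < uSeq N p (2*n)^2 + vSeq N p (2*n)^2)
    (s : ℂ) (n : ℕ) (hn : n < N) :
    (starRingEnd ℂ) (gg N p M s 0 n) * gg N p M s 0 (sig M n)
      + (starRingEnd ℂ) (gg N p M s 1 n) * gg N p M s 1 (sig M n) = 0 := by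
  have hψ := psih_cross N p M hNM hp hpM hpos n hn
  have factored : (starRingEnd ℂ) (gg N p M s 0 n) * gg N p M s 0 (sig M n)
      + (starRingEnd ℂ) (gg N p M s 1 n) * gg N p M s 1 (sig M n)
      = ((starRingEnd ℂ) (1 + s*(Complex.I * mP M n)) * (1 + s*(Complex.I * mP M (sig M n))))
        * ((starRingEnd ℂ) (psih N p 0 n) * psih N p 0 (sig M n)
           + (starRingEnd ℂ) (psih N p 1 n) * psih N p 1 (sig M n)) := by
    simp only [gg, map_mul]
    ring
  rw [factored, hψ, mul_zero]

lemma cH_conj (N M : ℕ) (hNM : N = 2*M) (n : ℕ) (h1 : 1 ≤ n) (h2 : n < N) :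
    (starRingEnd ℂ) (cH N M n) = cH N M (N - n) := by
  simp only [cH]
  split_ifs <;> first | (exfalso; omega) | simp

lemma dft_conj (N : ℕ) (hN : 0 < N) (x : ℤ → ℂ) (hreal : ∀ k : ℤ, (x k).im = 0)
    (n : ℕ) (hn : n ≤ N) :
    (starRingEnd ℂ) (dft N x n) = dft N x ((N - n : ℕ):ℤ) := by
  rw [dft, map_sum, dft]
  apply Finset.sum_congr rfl
  intro j _
  rw [map_mul, conj_ww_zpow, neg_neg]
  have hx : (starRingEnd ℂ) (x j) = x j := Complex.conj_eq_iff_im.mpr (hreal j)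
  rw [hx]
  congr 1
  have hc : ((N - n : ℕ):ℤ) = (N:ℤ) - n := by omega
  have h1 : ww N ^ ((N:ℤ) * (-(j:ℤ))) = 1 := by
    rw [zpow_mul, ww_pow_N N hN, one_zpow]
  rw [hc, show -((j:ℤ)*((N:ℤ)-(n:ℤ))) = (j:ℤ)*(n:ℤ) + (N:ℤ)*(-(j:ℤ)) from by ring,
    zpow_add₀ (ww_ne_zero N), h1, mul_one]

lemma hilbert_real (N M : ℕ) (hNM : N = 2*M) (hM0 : 0 < M) (x : ℤ → ℂ)
    (hreal : ∀ k : ℤ, (x k).im = 0) (k : ℤ) : (hilbertT N x k).im = 0 := by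
  have hN : 0 < N := by omega
  have hw := ww_ne_zero N
  apply Complex.conj_eq_iff_im.mp
  rw [hilbertT_eq N M hNM x k, map_mul, map_inv₀, map_natCast, map_sum]
  congr 1
  have hF0 : cH N M 0 * dft N x (0:ℕ) * ww N ^ (k * ((0:ℕ):ℤ)) = 0 := by
    simp only [cH]
    norm_num
  have hcF0 : (starRingEnd ℂ) (cH N M 0 * dft N x (0:ℕ) * ww N ^ (k * ((0:ℕ):ℤ))) = 0 := by
    rw [hF0, map_zero]
  rw [← Finset.sum_erase (Finset.range N) hcF0, ← Finset.sum_erase (Finset.range N) hF0]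
  apply Finset.sum_nbij' (i := fun (n:ℕ) => N - n) (j := fun (n:ℕ) => N - n)
  · intro a ha
    simp only [Finset.mem_erase, Finset.mem_range] at *
    omega
  · intro a ha
    simp only [Finset.mem_erase, Finset.mem_range] at *
    omega
  · intro a ha
    simp only [Finset.mem_erase, Finset.mem_range] at ha
    omega
  · intro a ha
    simp only [Finset.mem_erase, Finset.mem_range] at ha
    omega
  · intro a ha
    simp only [Finset.mem_erase, Finset.mem_range] at ha
    rw [map_mul, map_mul, cH_conj N M hNM a (by omega) (by omega),
      dft_conj N hN x hreal a (by omega), conj_ww_zpow]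
    congr 1
    have hc : ((N - a : ℕ):ℤ) = (N:ℤ) - a := by omega
    have h1 : ww N ^ ((N:ℤ) * k) = 1 := by
      rw [zpow_mul, ww_pow_N N hN, one_zpow]
    rw [hc, show (k*((N:ℤ)-(a:ℤ))) = -(k*(a:ℤ)) + (N:ℤ)*k from by ring, zpow_add₀ hw,
      h1, mul_one]

lemma frame_core (N p M : ℕ) (hNM : N = 2*M) (hp : 2 ≤ p) (hpM : p ≤ M)
    (hpos : ∀ n : ℤ, 0 < uSeq N p (2*n)^2 + vSeq N p (2*n)^2)
    (x : ℤ → ℂ) (hper : ∀ k : ℤ, x (k + N) = x k) (s : ℂ) (hs : s = 1 ∨ s = -1) (k : ℤ) :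
    ∑ lam ∈ Finset.range 2, ∑ l ∈ Finset.range M,
      inner1 N x (fun j => psi1 N p lam (j - 2*(l:ℤ))
          + s * (Complex.I * cwpT N (psi1 N p lam) (j - 2*(l:ℤ))))
        * (psi1 N p lam (k - 2*(l:ℤ)) + s * (Complex.I * cwpT N (psi1 N p lam) (k - 2*(l:ℤ))))
    = 2 * (x k + s * (Complex.I * hilbertT N x k)) := by
  have hM0 : 0 < M := by omega
  have hN : 0 < N := by omega
  have hNC : (N:ℂ) ≠ 0 := Nat.cast_ne_zero.mpr hN.ne'
  rw [Finset.sum_range_succ, Finset.sum_range_succ, Finset.sum_range_zero, zero_add,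
    frame_lam N p M hNM hM0 x s 0 k, frame_lam N p M hNM hM0 x s 1 k, ← Finset.sum_add_distrib]
  have key : ∀ n ∈ Finset.range N,
      ((N:ℂ)⁻¹ * (2:ℂ)⁻¹ * ((starRingEnd ℂ) (gg N p M s 0 n) * dft N x n *
        (gg N p M s 0 n * ww N ^ (k * (n:ℤ))
          + gg N p M s 0 (sig M n) * ww N ^ (k * ((sig M n : ℕ):ℤ))))
       + (N:ℂ)⁻¹ * (2:ℂ)⁻¹ * ((starRingEnd ℂ) (gg N p M s 1 n) * dft N x n *
        (gg N p M s 1 n * ww N ^ (k * (n:ℤ))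
          + gg N p M s 1 (sig M n) * ww N ^ (k * ((sig M n : ℕ):ℤ)))))
      = (N:ℂ)⁻¹ * ((2 + 2*s*(Complex.I * cH N M n)) * (dft N x n * ww N ^ (k * (n:ℤ)))) := by
    intro n hn
    have hd := gg_diag N p M hNM hp hpM hpos s hs n (Finset.mem_range.mp hn)
    have hc := gg_cross N p M hNM hp hpM hpos s n (Finset.mem_range.mp hn)
    linear_combination ((N:ℂ)⁻¹ * (2:ℂ)⁻¹ * dft N x ↑n * ww N ^ (k * (n:ℤ))) * hd
      + ((N:ℂ)⁻¹ * (2:ℂ)⁻¹ * dft N x ↑n * ww N ^ (k * ((sig M n : ℕ):ℤ))) * hc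
  rw [Finset.sum_congr rfl key]
  have hH := hilbertT_eq N M hNM x k
  have hx := dft_inv N hN x hper k
  rw [← hx, hH]
  set A := ∑ n ∈ Finset.range N, dft N x n * ww N ^ (k * (n:ℤ)) with hA
  set B := ∑ n ∈ Finset.range N, cH N M n * dft N x n * ww N ^ (k * (n:ℤ)) with hB
  have expand : ∑ n ∈ Finset.range N,
      (N:ℂ)⁻¹ * ((2 + 2*s*(Complex.I * cH N M n)) * (dft N x ↑n * ww N ^ (k * (n:ℤ))))
      = (N:ℂ)⁻¹ * (2 * A) + (N:ℂ)⁻¹ * (2*s*Complex.I*B) := by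
    rw [hA, hB, Finset.mul_sum, Finset.mul_sum, Finset.mul_sum, Finset.mul_sum,
      ← Finset.sum_add_distrib]
    apply Finset.sum_congr rfl
    intro n _
    ring
  rw [expand]
  ring

/-- The frame operators of the quasi-analytic wavelet packets produce the
    analytic signals: Σ_{λ,l} ⟨x,Ψ_{±,λ}[·−2l]⟩ Ψ_{±,λ}[k−2l] = 2(x[k] ± i·H(x)[k]);
    in particular a real-valued x is the real part of (1/2)·Σ_{λ,l} ⟨x,Ψ_{±,λ}[·−2l]⟩ Ψ_{±,λ}[·−2l]. -/
theorem qwp_frame_analytic (N p : ℕ) (hN : 0 < N) (hNe : Even N)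
    (hp : 2 ≤ p) (hpN : p ≤ N / 2)
    (hpos : ∀ n : ℤ, 0 < uSeq N p (2 * n) ^ 2 + vSeq N p (2 * n) ^ 2)
    (x : ℤ → ℂ) (hper : ∀ k : ℤ, x (k + N) = x k) :
    (∀ k : ℤ,
      (∑ lam ∈ Finset.range 2, ∑ l ∈ Finset.range (N / 2),
          inner1 N x (fun j => qwpP N p lam (j - 2 * (l : ℤ))) * qwpP N p lam (k - 2 * (l : ℤ)))
        = 2 * (x k + Complex.I * hilbertT N x k)) ∧
    (∀ k : ℤ,
      (∑ lam ∈ Finset.range 2, ∑ l ∈ Finset.range (N / 2),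
          inner1 N x (fun j => qwpM N p lam (j - 2 * (l : ℤ))) * qwpM N p lam (k - 2 * (l : ℤ)))
        = 2 * (x k - Complex.I * hilbertT N x k)) ∧
    ((∀ k : ℤ, (x k).im = 0) → ∀ k : ℤ,
      x k = ((((1 : ℂ) / 2) * ∑ lam ∈ Finset.range 2, ∑ l ∈ Finset.range (N / 2),
          inner1 N x (fun j => qwpP N p lam (j - 2 * (l : ℤ))) *
            qwpP N p lam (k - 2 * (l : ℤ))).re : ℂ) ∧
      x k = ((((1 : ℂ) / 2) * ∑ lam ∈ Finset.range 2, ∑ l ∈ Finset.range (N / 2),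
          inner1 N x (fun j => qwpM N p lam (j - 2 * (l : ℤ))) *
            qwpM N p lam (k - 2 * (l : ℤ))).re : ℂ)) := by
  obtain ⟨M, hM2⟩ := hNe
  have hNM : N = 2*M := by omega
  have hM0 : 0 < M := by omega
  have hpM : p ≤ M := by omega
  have hhalf : N / 2 = M := by omega
  have hplus : ∀ k : ℤ, (∑ lam ∈ Finset.range 2, ∑ l ∈ Finset.range (N/2),
      inner1 N x (fun j => qwpP N p lam (j - 2*(l:ℤ))) * qwpP N p lam (k - 2*(l:ℤ)))
      = 2 * (x k + Complex.I * hilbertT N x k) := by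
    intro k
    rw [hhalf]
    have hcore := frame_core N p M hNM hp hpM hpos x hper 1 (Or.inl rfl) k
    have he : ∀ lam ∈ Finset.range 2, ∀ l ∈ Finset.range M,
        inner1 N x (fun j => qwpP N p lam (j - 2*(l:ℤ))) * qwpP N p lam (k - 2*(l:ℤ))
        = inner1 N x (fun j => psi1 N p lam (j - 2*(l:ℤ))
            + 1 * (Complex.I * cwpT N (psi1 N p lam) (j - 2*(l:ℤ))))
          * (psi1 N p lam (k - 2*(l:ℤ))
            + 1 * (Complex.I * cwpT N (psi1 N p lam) (k - 2*(l:ℤ)))) := by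
      intro lam _ l _
      have h1 : (fun j => qwpP N p lam (j - 2*(l:ℤ)))
          = fun j => psi1 N p lam (j - 2*(l:ℤ))
            + 1 * (Complex.I * cwpT N (psi1 N p lam) (j - 2*(l:ℤ))) := by
        funext j
        rw [qwpP]
        ring
      have h2 : qwpP N p lam (k - 2*(l:ℤ)) = psi1 N p lam (k - 2*(l:ℤ))
          + 1 * (Complex.I * cwpT N (psi1 N p lam) (k - 2*(l:ℤ))) := by
        rw [qwpP]
        ring
      rw [h1, h2]
    rw [Finset.sum_congr rfl (fun lam hlam => Finset.sum_congr rfl (fun l hl => he lam hlam l hl)),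
      hcore]
    ring
  have hminus : ∀ k : ℤ, (∑ lam ∈ Finset.range 2, ∑ l ∈ Finset.range (N/2),
      inner1 N x (fun j => qwpM N p lam (j - 2*(l:ℤ))) * qwpM N p lam (k - 2*(l:ℤ)))
      = 2 * (x k - Complex.I * hilbertT N x k) := by
    intro k
    rw [hhalf]
    have hcore := frame_core N p M hNM hp hpM hpos x hper (-1) (Or.inr rfl) k
    have he : ∀ lam ∈ Finset.range 2, ∀ l ∈ Finset.range M,
        inner1 N x (fun j => qwpM N p lam (j - 2*(l:ℤ))) * qwpM N p lam (k - 2*(l:ℤ))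
        = inner1 N x (fun j => psi1 N p lam (j - 2*(l:ℤ))
            + (-1) * (Complex.I * cwpT N (psi1 N p lam) (j - 2*(l:ℤ))))
          * (psi1 N p lam (k - 2*(l:ℤ))
            + (-1) * (Complex.I * cwpT N (psi1 N p lam) (k - 2*(l:ℤ)))) := by
      intro lam _ l _
      have h1 : (fun j => qwpM N p lam (j - 2*(l:ℤ)))
          = fun j => psi1 N p lam (j - 2*(l:ℤ))
            + (-1) * (Complex.I * cwpT N (psi1 N p lam) (j - 2*(l:ℤ))) := by
        funext j
        rw [qwpM]
        ring
      have h2 : qwpM N p lam (k - 2*(l:ℤ)) = psi1 N p lam (k - 2*(l:ℤ))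
          + (-1) * (Complex.I * cwpT N (psi1 N p lam) (k - 2*(l:ℤ))) := by
        rw [qwpM]
        ring
      rw [h1, h2]
    rw [Finset.sum_congr rfl (fun lam hlam => Finset.sum_congr rfl (fun l hl => he lam hlam l hl)),
      hcore]
    ring
  refine ⟨hplus, hminus, ?_⟩
  intro hreal k
  have hHim : (hilbertT N x k).im = 0 := hilbert_real N M hNM hM0 x hreal k
  constructor
  · rw [hplus k]
    have hv : (1:ℂ)/2 * (2*(x k + Complex.I * hilbertT N x k))
        = x k + Complex.I * hilbertT N x k := by ring
    rw [hv]
    apply Complex.ext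
    · simp [Complex.add_re, Complex.mul_re, Complex.I_re, Complex.I_im, hHim]
    · simp [hreal k]
  · rw [hminus k]
    have hv : (1:ℂ)/2 * (2*(x k - Complex.I * hilbertT N x k))
        = x k - Complex.I * hilbertT N x k := by ring
    rw [hv]
    apply Complex.ext
    · simp [Complex.sub_re, Complex.mul_re, Complex.I_re, Complex.I_im, hHim]
    · simp [hreal k]

end WP
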